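/- For every natural number k, the largest possible cardinality of a finite abelian group G possessing two generators g_1, g_2 such that every element of G can be written as a_1 g_1 + a_2 g_2 with integers a_1, a_2 satisfying |a_1| + |a_2| ≤ k is exactly 2k² + 2k + 1. Equivalently, the maximum of [ℤ² : L] over finite-index subgroups L ≤ ℤ² with S_{2,k} + L = ℤ² equals 2k² + 2k + 1, and this maximum is attained. -/

import Mathlib

open Finset

/-- The "diamond" `S_{2,k}` as a finset. -/
private noncomputable def S10 (k : ℕ) : Finset (ℤ × ℤ) :=
  (Finset.Icc (-(k:ℤ)) k ×ˢ Finset.Icc (-(k:ℤ)) k).filter (fun p => |p.1| + |p.2| ≤ (k:ℤ))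

private lemma mem_S10 {k : ℕ} {p : ℤ × ℤ} : p ∈ S10 k ↔ |p.1| + |p.2| ≤ (k:ℤ) := by
  simp only [S10, Finset.mem_filter, Finset.mem_product, Finset.mem_Icc]
  constructor
  · exact fun h => h.2
  · intro h
    have h1 := abs_nonneg p.1
    have h2 := abs_nonneg p.2
    have ha := abs_le.mp (show |p.1| ≤ (k:ℤ) by linarith)
    have hb := abs_le.mp (show |p.2| ≤ (k:ℤ) by linarith)
    exact ⟨⟨⟨ha.1, ha.2⟩, ⟨hb.1, hb.2⟩⟩, h⟩

/-- Decoding: every integer is congruent mod `2k²+2k+1` to `a + (2k+1)b` with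
`|a|+|b| ≤ k`. -/
private lemma key10 (k : ℕ) (x : ℤ) :
    ∃ a b : ℤ, |a| + |b| ≤ (k : ℤ) ∧
      ((2 * k ^ 2 + 2 * k + 1 : ℕ) : ℤ) ∣ x - (a + (2 * (k : ℤ) + 1) * b) := by
  have hK0 : (0:ℤ) ≤ (k:ℤ) := Int.natCast_nonneg k
  set K : ℤ := (k : ℤ) with hK
  have hn : ((2 * k ^ 2 + 2 * k + 1 : ℕ) : ℤ) = 2 * K ^ 2 + 2 * K + 1 := by push_cast; ring
  rw [hn]
  have hnpos : (0:ℤ) < 2 * K ^ 2 + 2 * K + 1 := by positivity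
  set r : ℤ := x % (2 * K ^ 2 + 2 * K + 1) with hrdef
  have hr0 : 0 ≤ r := Int.emod_nonneg x hnpos.ne'
  have hr1 : r < 2 * K ^ 2 + 2 * K + 1 := Int.emod_lt_of_pos x hnpos
  obtain ⟨c, hc⟩ : (2 * K ^ 2 + 2 * K + 1) ∣ x - r := by
    rw [hrdef, Int.emod_def]; exact ⟨x / (2 * K ^ 2 + 2 * K + 1), by ring⟩
  have hdpos : (0:ℤ) < 2 * K + 1 := by omega
  set q : ℤ := (r + K) / (2 * K + 1) with hq
  set a : ℤ := (r + K) % (2 * K + 1) - K with ha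
  have hrem : (2*K+1) * q + ((r + K) % (2*K+1)) = r + K := Int.mul_ediv_add_emod _ _
  have hmod0 : 0 ≤ (r + K) % (2*K+1) := Int.emod_nonneg _ hdpos.ne'
  have hmod1 : (r + K) % (2*K+1) < 2*K+1 := Int.emod_lt_of_pos _ hdpos
  have hra : r = a + (2*K+1) * q := by omega
  have ha1 : -K ≤ a := by omega
  have ha2 : a ≤ K := by omega
  have hq0 : 0 ≤ q := Int.ediv_nonneg (by omega) hdpos.le
  have hqK : q ≤ K := by
    by_contra h
    push_neg at h
    have h3 : (2*K+1) * (K + 1) ≤ (2*K+1) * q :=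
      mul_le_mul_of_nonneg_left (by omega) hdpos.le
    nlinarith
  rcases le_or_gt (|a| + q) K with hcase | hcase
  · refine ⟨a, q, ?_, ?_⟩
    · rw [abs_of_nonneg hq0]; exact hcase
    · refine ⟨c, ?_⟩
      linear_combination hc + hra
  · by_cases ha0 : 0 ≤ a
    · have haa : |a| = a := abs_of_nonneg ha0
      have hge : K + 1 ≤ a + q := by omega
      refine ⟨a - (K + 1), q - K, ?_, ?_⟩
      · rw [abs_of_nonpos (by omega), abs_of_nonpos (by omega)]; omega
      · refine ⟨c + 1, ?_⟩
        linear_combination hc + hra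
    · push_neg at ha0
      have haa : |a| = -a := abs_of_neg ha0
      have hge : K + 1 ≤ q - a := by omega
      refine ⟨a + K, q - (K + 1), ?_, ?_⟩
      · rw [abs_of_nonneg (by omega), abs_of_nonpos (by omega)]; omega
      · refine ⟨c + 1, ?_⟩
        linear_combination hc + hra

/-- Injectivity of `(a,b) ↦ a + (2k+1)b mod (2k²+2k+1)` on the diamond. -/
private lemma inj10 (k : ℕ) {a b a' b' : ℤ} (h1 : |a| + |b| ≤ (k:ℤ))
    (h2 : |a'| + |b'| ≤ (k:ℤ))
    (hdvd : ((2 * k ^ 2 + 2 * k + 1 : ℕ) : ℤ) ∣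
      (a + (2 * (k:ℤ) + 1) * b) - (a' + (2 * (k:ℤ) + 1) * b')) :
    a = a' ∧ b = b' := by
  have hK0 : (0:ℤ) ≤ (k:ℤ) := Int.natCast_nonneg k
  set K : ℤ := (k : ℤ) with hK
  have hn : ((2 * k ^ 2 + 2 * k + 1 : ℕ) : ℤ) = 2 * K ^ 2 + 2 * K + 1 := by push_cast; ring
  rw [hn] at hdvd
  obtain ⟨m, hm⟩ := hdvd
  have hb0 := abs_nonneg b
  have hb0' := abs_nonneg b'
  have ha0 := abs_nonneg a
  have ha0' := abs_nonneg a'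
  have haa : |a - a'| ≤ |a| + |a'| := abs_sub a a'
  have hvw : |b - b'| ≤ |b| + |b'| := abs_sub b b'
  have hv0 := abs_nonneg (b - b')
  have hu0 := abs_nonneg (a - a')
  have hm0 : m = 0 := by
    by_contra h
    have hM : 1 ≤ |m| := Int.one_le_abs h
    have hub : |m| * (2*K^2+2*K+1) ≤ |a - a'| + (2*K+1) * |b - b'| := by
      have h3 : |(a - a') + (2*K+1)*(b - b')| ≤ |a - a'| + |(2*K+1)*(b-b')| := abs_add_le _ _
      have h4 : (a - a') + (2*K+1)*(b-b') = m * (2*K^2+2*K+1) := by linear_combination hm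
      rw [h4, abs_mul, abs_mul,
        abs_of_nonneg (show (0:ℤ) ≤ 2*K^2+2*K+1 by positivity),
        abs_of_nonneg (show (0:ℤ) ≤ 2*K+1 by omega)] at h3
      exact h3
    have hn1 : (2*K^2+2*K+1) ≤ |m| * (2*K^2+2*K+1) :=
      le_mul_of_one_le_left (by positivity) hM
    have hKv : 2*K^2 + 1 ≤ 2*K*|b - b'| := by nlinarith
    have hvK : K < |b - b'| := by
      by_contra hc
      push_neg at hc
      have := mul_le_mul_of_nonneg_left hc (show (0:ℤ) ≤ 2*K by omega)
      nlinarith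
    have hw2 : |b - b'| ≤ 2*K := by linarith
    have hm1 : |m| = 1 := by
      by_contra hc
      have h2m : 2 ≤ |m| := by omega
      have h2n := mul_le_mul_of_nonneg_right h2m
        (show (0:ℤ) ≤ 2*K^2+2*K+1 by positivity)
      nlinarith
    have hrev : (2*K+1) * |b - b'| ≤ |m| * (2*K^2+2*K+1) + |a - a'| := by
      have h5 : (2*K+1)*(b-b') = m*(2*K^2+2*K+1) - (a - a') := by linear_combination hm
      calc (2*K+1) * |b-b'| = |(2*K+1)*(b-b')| := by
            rw [abs_mul, abs_of_nonneg (show (0:ℤ) ≤ 2*K+1 by omega)]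
        _ = |m*(2*K^2+2*K+1) - (a-a')| := by rw [h5]
        _ ≤ |m*(2*K^2+2*K+1)| + |a-a'| := abs_sub _ _
        _ = |m| * (2*K^2+2*K+1) + |a-a'| := by
            rw [abs_mul, abs_of_nonneg (show (0:ℤ) ≤ 2*K^2+2*K+1 by positivity)]
    rw [hm1, one_mul] at hrev
    have hvK1 : K + 1 ≤ |b - b'| := by omega
    have hfin := mul_le_mul_of_nonneg_left hvK1 (show (0:ℤ) ≤ 2*K+2 by omega)
    nlinarith
  rw [hm0, mul_zero] at hm
  have hbb : b = b' := by
    by_contra hc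
    have h1b : 1 ≤ |b - b'| := Int.one_le_abs (sub_ne_zero.mpr hc)
    have h5 : (2*K+1)*(b - b') = a' - a := by linear_combination hm
    have h6 : |(2*K+1)*(b-b')| = |a' - a| := by rw [h5]
    rw [abs_mul, abs_of_nonneg (show (0:ℤ) ≤ 2*K+1 by omega)] at h6
    have h7 : |a' - a| ≤ |a'| + |a| := abs_sub _ _
    have h8 : (2*K+1)*1 ≤ (2*K+1)*|b-b'| := mul_le_mul_of_nonneg_left h1b (by omega)
    linarith
  refine ⟨?_, hbb⟩
  subst hbb
  linear_combination hm

private lemma card_S10_le (k : ℕ) : (S10 k).card ≤ 2 * k ^ 2 + 2 * k + 1 := by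
  haveI : NeZero (2 * k ^ 2 + 2 * k + 1) := ⟨by omega⟩
  have h : (S10 k).card ≤ (Finset.univ : Finset (ZMod (2*k^2+2*k+1))).card := by
    apply Finset.card_le_card_of_injOn
      (fun p : ℤ × ℤ => ((p.1 + (2*(k:ℤ)+1) * p.2 : ℤ) : ZMod (2 * k ^ 2 + 2 * k + 1)))
      (fun p _ => Finset.mem_univ _)
    intro p hp q hq hfeq
    have hp' := mem_S10.mp hp
    have hq' := mem_S10.mp hq
    have hmod : ((q.1 + (2*(k:ℤ)+1) * q.2) : ℤ) ≡ (p.1 + (2*(k:ℤ)+1) * p.2)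
        [ZMOD (2 * k ^ 2 + 2 * k + 1)] :=
      (ZMod.intCast_eq_intCast_iff _ _ _).mp hfeq.symm
    have hdvd := hmod.dvd
    obtain ⟨h1, h2⟩ := inj10 k hp' hq' hdvd
    exact Prod.ext h1 h2
  calc (S10 k).card ≤ (Finset.univ : Finset (ZMod (2*k^2+2*k+1))).card := h
    _ = 2*k^2+2*k+1 := by rw [Finset.card_univ, ZMod.card]

theorem stmt10 (k : ℕ) :
    IsGreatest {n : ℕ | ∃ (G : AddCommGrpCat.{0}) (g₁ g₂ : G), Finite G ∧
        Nat.card G = n ∧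
        ∀ a : G, ∃ a₁ a₂ : ℤ, |a₁| + |a₂| ≤ (k : ℤ) ∧ a = a₁ • g₁ + a₂ • g₂}
      (2 * k ^ 2 + 2 * k + 1) ∧
    IsGreatest {n : ℕ | ∃ L : AddSubgroup (Fin 2 → ℤ), L.index = n ∧ L.index ≠ 0 ∧
        ∀ x : Fin 2 → ℤ, ∃ s : Fin 2 → ℤ, (∑ i, |s i|) ≤ (k : ℤ) ∧ x - s ∈ L}
      (2 * k ^ 2 + 2 * k + 1) := by
  haveI : NeZero (2 * k ^ 2 + 2 * k + 1) := ⟨by omega⟩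
  constructor
  · constructor
    · -- membership, part 1
      refine ⟨AddCommGrpCat.of (ZMod (2 * k ^ 2 + 2 * k + 1)),
        (show (AddCommGrpCat.of (ZMod (2 * k ^ 2 + 2 * k + 1)) : Type) from
          (1 : ZMod (2 * k ^ 2 + 2 * k + 1))),
        (show (AddCommGrpCat.of (ZMod (2 * k ^ 2 + 2 * k + 1)) : Type) from
          (((2*(k:ℤ)+1 : ℤ)) : ZMod (2 * k ^ 2 + 2 * k + 1))), ?_, ?_, ?_⟩
      · exact inferInstanceAs (Finite (ZMod (2 * k ^ 2 + 2 * k + 1)))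
      · exact Nat.card_zmod (2 * k ^ 2 + 2 * k + 1)
      · intro g
        obtain ⟨x, rfl⟩ := ZMod.intCast_surjective (n := 2 * k ^ 2 + 2 * k + 1) g
        obtain ⟨a, b, hab, hdvd⟩ := key10 k x
        refine ⟨a, b, hab, ?_⟩
        have h0 : (((x - (a + (2*(k:ℤ)+1)*b)) : ℤ) : ZMod (2 * k ^ 2 + 2 * k + 1)) = 0 :=
          (ZMod.intCast_zmod_eq_zero_iff_dvd _ _).mpr hdvd
        show ((x:ℤ) : ZMod (2 * k ^ 2 + 2 * k + 1)) =
          a • (1 : ZMod (2 * k ^ 2 + 2 * k + 1)) +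
          b • (((2*(k:ℤ)+1 : ℤ)) : ZMod (2 * k ^ 2 + 2 * k + 1))
        rw [zsmul_eq_mul, zsmul_eq_mul]
        push_cast at h0 ⊢
        linear_combination h0
    · -- upper bound, part 1
      rintro nG ⟨G, g₁, g₂, hfin, hcard, hgen⟩
      haveI := hfin
      haveI : Fintype G := Fintype.ofFinite _
      haveI : DecidableEq ↑G := Classical.decEq _
      rw [← hcard, Nat.card_eq_fintype_card]
      have hsub : (Finset.univ : Finset G) ⊆
          (S10 k).image (fun p : ℤ × ℤ => p.1 • g₁ + p.2 • g₂) := by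
        intro g _
        obtain ⟨a₁, a₂, hle, hg⟩ := hgen g
        exact Finset.mem_image.mpr ⟨(a₁, a₂), mem_S10.mpr hle, by simpa using hg.symm⟩
      calc Fintype.card G = (Finset.univ : Finset G).card := Finset.card_univ.symm
        _ ≤ ((S10 k).image (fun p : ℤ × ℤ => p.1 • g₁ + p.2 • g₂)).card :=
            Finset.card_le_card hsub
        _ ≤ (S10 k).card := Finset.card_image_le
        _ ≤ 2 * k ^ 2 + 2 * k + 1 := card_S10_le k
  · constructor
    · -- membership, part 2
      refine ⟨(AddMonoidHom.mk' (fun x : Fin 2 → ℤ =>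
          ((x 0 + (2*(k:ℤ)+1) * x 1 : ℤ) : ZMod (2 * k ^ 2 + 2 * k + 1)))
          (by intro x y; simp only [Pi.add_apply]; push_cast; ring)).ker, ?_, ?_, ?_⟩
      · have hsurj : Function.Surjective (AddMonoidHom.mk' (fun x : Fin 2 → ℤ =>
            ((x 0 + (2*(k:ℤ)+1) * x 1 : ℤ) : ZMod (2 * k ^ 2 + 2 * k + 1)))
            (by intro x y; simp only [Pi.add_apply]; push_cast; ring)) := by
          intro z
          obtain ⟨y, rfl⟩ := ZMod.intCast_surjective (n := 2 * k ^ 2 + 2 * k + 1) z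
          exact ⟨![y, 0], by simp⟩
        rw [AddSubgroup.index_ker, AddMonoidHom.range_eq_top.mpr hsurj,
          Nat.card_congr AddSubgroup.topEquiv.toEquiv, Nat.card_zmod]
      · have hsurj : Function.Surjective (AddMonoidHom.mk' (fun x : Fin 2 → ℤ =>
            ((x 0 + (2*(k:ℤ)+1) * x 1 : ℤ) : ZMod (2 * k ^ 2 + 2 * k + 1)))
            (by intro x y; simp only [Pi.add_apply]; push_cast; ring)) := by
          intro z
          obtain ⟨y, rfl⟩ := ZMod.intCast_surjective (n := 2 * k ^ 2 + 2 * k + 1) z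
          exact ⟨![y, 0], by simp⟩
        rw [AddSubgroup.index_ker, AddMonoidHom.range_eq_top.mpr hsurj,
          Nat.card_congr AddSubgroup.topEquiv.toEquiv, Nat.card_zmod]
        omega
      · intro x
        obtain ⟨a, b, hab, hdvd⟩ := key10 k (x 0 + (2*(k:ℤ)+1) * x 1)
        refine ⟨![a, b], ?_, ?_⟩
        · rw [Fin.sum_univ_two]
          simpa using hab
        · rw [AddMonoidHom.mem_ker]
          show (((x - ![a,b]) 0 + (2*(k:ℤ)+1) * ((x - ![a,b]) 1) : ℤ)
            : ZMod (2 * k ^ 2 + 2 * k + 1)) = 0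
          apply (ZMod.intCast_zmod_eq_zero_iff_dvd _ _).mpr
          have e : (x - ![a,b]) 0 + (2*(k:ℤ)+1) * ((x - ![a,b]) 1)
              = (x 0 + (2*(k:ℤ)+1) * x 1) - (a + (2*(k:ℤ)+1)*b) := by
            simp [Pi.sub_apply]; ring
          rw [e]
          exact hdvd
    · -- upper bound, part 2
      rintro nL ⟨L, hidx, hne, hcov⟩
      rw [← hidx, AddSubgroup.index_eq_card]
      haveI hfin : Finite ((Fin 2 → ℤ) ⧸ L) :=
        (Nat.card_ne_zero.mp (by rw [← AddSubgroup.index_eq_card]; exact hne)).2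
      haveI : Fintype ((Fin 2 → ℤ) ⧸ L) := Fintype.ofFinite _
      haveI : DecidableEq ((Fin 2 → ℤ) ⧸ L) := Classical.decEq _
      rw [Nat.card_eq_fintype_card]
      have hsub : (Finset.univ : Finset ((Fin 2 → ℤ) ⧸ L)) ⊆
          (S10 k).image (fun p : ℤ × ℤ => (QuotientAddGroup.mk ![p.1, p.2] :
            (Fin 2 → ℤ) ⧸ L)) := by
        intro q _
        obtain ⟨x, rfl⟩ := QuotientAddGroup.mk_surjective q
        obtain ⟨s, hs1, hs2⟩ := hcov x
        refine Finset.mem_image.mpr ⟨(s 0, s 1), mem_S10.mpr ?_, ?_⟩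
        · rw [Fin.sum_univ_two] at hs1; exact hs1
        · have hse : ![s 0, s 1] = s := by
            funext i; fin_cases i <;> simp
          rw [hse]
          exact QuotientAddGroup.eq.mpr (by rw [neg_add_eq_sub]; exact hs2)
      calc Fintype.card ((Fin 2 → ℤ) ⧸ L)
          = (Finset.univ : Finset ((Fin 2 → ℤ) ⧸ L)).card := Finset.card_univ.symm
        _ ≤ _ := Finset.card_le_card hsub
        _ ≤ (S10 k).card := Finset.card_image_le
        _ ≤ 2 * k ^ 2 + 2 * k + 1 := card_S10_le k
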